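/- arXiv:1006.4357 — 2 statements merged into one kernel-verified Lean document; each statement's English description precedes it below -/
import Mathlib

section
/- Let $F_1$ and $F_2$ be subgraphs of a graph $G$ and let $F = F_1 \cup F_2$. Suppose $W \subseteq V(G)$ is a set of vertices such that $V(F_1) \cap V(F_2) \subseteq W$. Let $\alpha_\ell$ (for $\ell = 1,2$) be the partition of $W \cap V(F_\ell)$ induced by connectivity in $F_\ell$, extended to $W$ by singletons, and let $\alpha$ be the partition of $W$ induced by connectivity in $F$. Then $\alpha = \alpha_1 \vee \alpha_2$. -/
open SimpleGraph

private def SRel {V : Type*} {G : SimpleGraph V} (F₁ F₂ : G.Subgraph) (W : Set V) :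
    V → V → Prop := fun a b =>
  (a ∈ W ∧ b ∈ W ∧ (a = b ∨ ∃ (ha : a ∈ F₁.verts) (hb : b ∈ F₁.verts),
      F₁.coe.Reachable ⟨a, ha⟩ ⟨b, hb⟩)) ∨
  (a ∈ W ∧ b ∈ W ∧ (a = b ∨ ∃ (ha : a ∈ F₂.verts) (hb : b ∈ F₂.verts),
      F₂.coe.Reachable ⟨a, ha⟩ ⟨b, hb⟩))

private lemma rel_of_reach {V : Type*} {G : SimpleGraph V} (F₁ F₂ : G.Subgraph) (W : Set V)
    (i : Bool) {u a : V} (hu : u ∈ W) (ha : a ∈ W)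
    (hu' : u ∈ (bif i then F₁ else F₂).verts) (ha' : a ∈ (bif i then F₁ else F₂).verts)
    (h : (bif i then F₁ else F₂).coe.Reachable ⟨u, hu'⟩ ⟨a, ha'⟩) :
    SRel F₁ F₂ W u a := by
  cases i
  · exact Or.inr ⟨hu, ha, Or.inr ⟨hu', ha', h⟩⟩
  · exact Or.inl ⟨hu, ha, Or.inr ⟨hu', ha', h⟩⟩

private lemma key {V : Type*} {G : SimpleGraph V} (F₁ F₂ : G.Subgraph) (W : Set V)
    (hW : F₁.verts ∩ F₂.verts ⊆ W) :
    ∀ (a z : (F₁ ⊔ F₂).verts) (p : (F₁ ⊔ F₂).coe.Walk a z), (z : V) ∈ W →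
      ∀ (i : Bool) (u : V), u ∈ W →
      ∀ (hu : u ∈ (bif i then F₁ else F₂).verts)
        (ha : (a : V) ∈ (bif i then F₁ else F₂).verts),
        (bif i then F₁ else F₂).coe.Reachable ⟨u, hu⟩ ⟨a, ha⟩ →
        Relation.ReflTransGen (SRel F₁ F₂ W) u z := by
  intro a z p
  induction p with
  | nil =>
      intro hz i u hu hu' ha' h
      exact Relation.ReflTransGen.single (rel_of_reach _ _ _ i hu hz hu' ha' h)
  | @cons a b z hadj p ih =>
      intro hz i u hu hu' ha' h
      have hadj' : (F₁ ⊔ F₂).Adj ↑a ↑b := hadj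
      rcases (SimpleGraph.Subgraph.sup_adj).mp hadj' with h1 | h2
      · cases i with
        | true =>
            exact ih hz true u hu hu' h1.snd_mem
              (h.trans (SimpleGraph.Adj.reachable h1.coe))
        | false =>
            -- a is in both F₂ (current side) and F₁, hence in W
            have haW : (a : V) ∈ W := hW ⟨h1.fst_mem, ha'⟩
            have step : SRel F₁ F₂ W u ↑a :=
              rel_of_reach _ _ _ false hu haW hu' ha' h
            exact Relation.ReflTransGen.head step
              (ih hz true ↑a haW h1.fst_mem h1.snd_mem
                (SimpleGraph.Adj.reachable h1.coe))
      · cases i with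
        | false =>
            exact ih hz false u hu hu' h2.snd_mem
              (h.trans (SimpleGraph.Adj.reachable h2.coe))
        | true =>
            have haW : (a : V) ∈ W := hW ⟨ha', h2.fst_mem⟩
            have step : SRel F₁ F₂ W u ↑a :=
              rel_of_reach _ _ _ true hu haW hu' ha' h
            exact Relation.ReflTransGen.head step
              (ih hz false ↑a haW h2.fst_mem h2.snd_mem
                (SimpleGraph.Adj.reachable h2.coe))

/-- Let `F₁`, `F₂` be subgraphs of `G`, `F = F₁ ⊔ F₂`, and let `W` contain
`V(F₁) ∩ V(F₂)`. For vertices of `W`, the partition induced by connectivity in `F`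
(extended by singletons) is the join of the partitions induced by connectivity in
`F₁` and `F₂` (each extended to `W` by singletons). -/
theorem stmt_4 {V : Type*} (G : SimpleGraph V) (F₁ F₂ : G.Subgraph) (W : Set V)
    (hW : F₁.verts ∩ F₂.verts ⊆ W) (u v : V) (hu : u ∈ W) (hv : v ∈ W) :
    (u = v ∨ ∃ (hu' : u ∈ (F₁ ⊔ F₂).verts) (hv' : v ∈ (F₁ ⊔ F₂).verts),
        (F₁ ⊔ F₂).coe.Reachable ⟨u, hu'⟩ ⟨v, hv'⟩) ↔
      Relation.ReflTransGen
        (fun a b =>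
          (a ∈ W ∧ b ∈ W ∧ (a = b ∨ ∃ (ha : a ∈ F₁.verts) (hb : b ∈ F₁.verts),
              F₁.coe.Reachable ⟨a, ha⟩ ⟨b, hb⟩)) ∨
          (a ∈ W ∧ b ∈ W ∧ (a = b ∨ ∃ (ha : a ∈ F₂.verts) (hb : b ∈ F₂.verts),
              F₂.coe.Reachable ⟨a, ha⟩ ⟨b, hb⟩)))
        u v := by
  show _ ↔ Relation.ReflTransGen (SRel F₁ F₂ W) u v
  constructor
  · rintro (rfl | ⟨hu', hv', hr⟩)
    · exact Relation.ReflTransGen.refl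
    · obtain ⟨p⟩ := hr
      have hu'' : u ∈ F₁.verts ∪ F₂.verts := hu'
      rcases hu'' with h1 | h2
      · exact key F₁ F₂ W hW ⟨u, hu'⟩ ⟨v, hv'⟩ p hv true u hu h1 h1
          (SimpleGraph.Reachable.refl _)
      · exact key F₁ F₂ W hW ⟨u, hu'⟩ ⟨v, hv'⟩ p hv false u hu h2 h2
          (SimpleGraph.Reachable.refl _)
  · intro hr
    induction hr with
    | refl => exact Or.inl rfl
    | @tail b c hub hbc ih =>
        -- convert hbc : SRel F₁ F₂ W b c into the "F" version
        have hbc' : b = c ∨ ∃ (hb : b ∈ (F₁ ⊔ F₂).verts) (hc : c ∈ (F₁ ⊔ F₂).verts),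
            (F₁ ⊔ F₂).coe.Reachable ⟨b, hb⟩ ⟨c, hc⟩ := by
          rcases hbc with ⟨_, _, (rfl | ⟨hb, hc, hr⟩)⟩ | ⟨_, _, (rfl | ⟨hb, hc, hr⟩)⟩
          · exact Or.inl rfl
          · refine Or.inr ⟨Or.inl hb, Or.inl hc, ?_⟩
            exact hr.map (SimpleGraph.Subgraph.inclusion le_sup_left)
          · exact Or.inl rfl
          · refine Or.inr ⟨Or.inr hb, Or.inr hc, ?_⟩
            exact hr.map (SimpleGraph.Subgraph.inclusion le_sup_right)
        have hbW : b ∈ W := by rcases hbc with ⟨h, _⟩ | ⟨h, _⟩ <;> exact h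
        rcases ih hbW with rfl | ⟨hb', hu2, hr1⟩
        · rcases hbc' with rfl | ⟨hb, hc, hr⟩
          · exact Or.inl rfl
          · exact Or.inr ⟨hb, hc, hr⟩
        · rcases hbc' with rfl | ⟨hb, hc, hr⟩
          · exact Or.inr ⟨hb', hu2, hr1⟩
          · exact Or.inr ⟨hb', hc, hr1.trans hr⟩
end

section
/- Let $F^*$ be a forest in a graph $G$ and let $X$ be a set of terminal pairs, all connected by $F^*$, with penalties $\pi_i \ge 0$. Suppose feasible dual variables $y_{i,S} \ge 0$ satisfy the edge packing constraints $\sum_{S : e \in \delta(S)} \sum_i y_{i,S} \le c_e$ and additionally $\sum_{S \in \mathcal{S}_i} y_{i,S} \ge \pi'_i/2$ for every $i \in X$, where $\pi'_i = (2/\varepsilon)\pi_i$. Then $\sum_{i \in X} \pi_i \le \varepsilon \sum_{e \in F^*} c_e$. -/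
open scoped Classical

/-- The edge `e` has exactly one endpoint in `S`, i.e. `e ∈ δ(S)`. -/
def InCut {V : Type*} (S : Finset V) (e : V × V) : Prop :=
  (e.1 ∈ S ∧ e.2 ∉ S) ∨ (e.1 ∉ S ∧ e.2 ∈ S)

/-- The vertex set `S` separates `a` from `b`, i.e. `S ∈ 𝒮ᵢ` for the pair `(a,b)`. -/
def Separates {V : Type*} (S : Finset V) (a b : V) : Prop :=
  (a ∈ S ∧ b ∉ S) ∨ (a ∉ S ∧ b ∈ S)

/-- `a` and `b` are connected by the edge set `F`. -/
def ConnectedIn {V : Type*} (F : Finset (V × V)) (a b : V) : Prop :=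
  Relation.ReflTransGen (fun x y => (x, y) ∈ F ∨ (y, x) ∈ F) a b

lemma cross_lemma {V : Type*} (F : Finset (V × V)) (S : Finset V) {a b : V}
    (h : ConnectedIn F a b) (hs : Separates S a b) :
    ∃ e ∈ F, InCut S e := by
  induction h with
  | refl => unfold Separates at hs; tauto
  | @tail m b' hac hcb ih =>
    by_cases hsep : Separates S m b'
    · rcases hcb with he | he
      · exact ⟨_, he, by unfold InCut; unfold Separates at hsep; tauto⟩
      · exact ⟨_, he, by unfold InCut; unfold Separates at hsep; tauto⟩
    · apply ih
      unfold Separates at *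
      tauto

/-- If a forest `F*` connects all pairs of `X`, and feasible dual variables `y` satisfy
the edge packing constraints together with `∑_{S ∈ 𝒮ᵢ} y i S ≥ π'ᵢ/2` for all
`i ∈ X`, where `π'ᵢ = (2/ε) πᵢ`, then `∑_{i ∈ X} πᵢ ≤ ε ⋅ Length(F*)`. -/
theorem stmt_11 {V : Type*} [Fintype V] [DecidableEq V] {ι : Type*} [Fintype ι]
    (E : Finset (V × V)) (c : V × V → ℝ) (s t : ι → V) (π : ι → ℝ) (ε : ℝ)
    (y : ι → Finset V → ℝ) (X : Finset ι)
    (hc : ∀ e ∈ E, 0 ≤ c e) (hπ : ∀ i, 0 ≤ π i) (hε : 0 < ε)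
    (hy : ∀ i S, 0 ≤ y i S)
    (hedge : ∀ e ∈ E,
      ∑ S : Finset V, ∑ i : ι,
        (if InCut S e ∧ Separates S (s i) (t i) then y i S else 0) ≤ c e)
    (Fstar : Finset (V × V)) (hFstar : Fstar ⊆ E)
    (hconn : ∀ i ∈ X, ConnectedIn Fstar (s i) (t i))
    (hlow : ∀ i ∈ X, ((2 / ε) * π i) / 2 ≤
        ∑ S : Finset V, (if Separates S (s i) (t i) then y i S else 0)) :
    ∑ i ∈ X, π i ≤ ε * ∑ e ∈ Fstar, c e := by

  have key : ∀ i ∈ X, π i / ε ≤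
      ∑ S : Finset V, (if Separates S (s i) (t i) then y i S else 0) := by
    intro i hi
    have h1 := hlow i hi
    have h2 : (2 / ε) * π i / 2 = π i / ε := by field_simp
    linarith
  have mid : ∑ i ∈ X, ∑ S : Finset V, (if Separates S (s i) (t i) then y i S else 0)
      ≤ ∑ e ∈ Fstar, c e := by
    have step1 : ∀ i ∈ X,
        ∑ S : Finset V, (if Separates S (s i) (t i) then y i S else 0)
        ≤ ∑ S : Finset V, ∑ e ∈ Fstar,
            (if InCut S e ∧ Separates S (s i) (t i) then y i S else 0) := by
      intro i hi
      refine Finset.sum_le_sum fun S _ => ?_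
      by_cases hsep : Separates S (s i) (t i)
      · obtain ⟨e0, he0, hcut⟩ := cross_lemma Fstar S (hconn i hi) hsep
        rw [if_pos hsep]
        have := Finset.single_le_sum
          (f := fun e => if InCut S e ∧ Separates S (s i) (t i) then y i S else 0)
          (fun e _ => by split <;> first | exact hy _ _ | exact le_rfl) he0
        simpa [hcut, hsep] using this
      · rw [if_neg hsep]
        exact Finset.sum_nonneg fun e _ => by split <;> first | exact hy _ _ | exact le_rfl
    calc ∑ i ∈ X, ∑ S : Finset V, (if Separates S (s i) (t i) then y i S else 0)
        ≤ ∑ i ∈ X, ∑ S : Finset V, ∑ e ∈ Fstar,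
            (if InCut S e ∧ Separates S (s i) (t i) then y i S else 0) :=
          Finset.sum_le_sum step1
      _ ≤ ∑ i : ι, ∑ S : Finset V, ∑ e ∈ Fstar,
            (if InCut S e ∧ Separates S (s i) (t i) then y i S else 0) := by
          refine Finset.sum_le_sum_of_subset_of_nonneg (Finset.subset_univ X) ?_
          intro i _ _
          exact Finset.sum_nonneg fun S _ => Finset.sum_nonneg fun e _ => by split <;> first | exact hy _ _ | exact le_rfl
      _ = ∑ e ∈ Fstar, ∑ S : Finset V, ∑ i : ι,
            (if InCut S e ∧ Separates S (s i) (t i) then y i S else 0) := by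
          calc ∑ i : ι, ∑ S : Finset V, ∑ e ∈ Fstar,
                (if InCut S e ∧ Separates S (s i) (t i) then y i S else 0)
              = ∑ i : ι, ∑ e ∈ Fstar, ∑ S : Finset V,
                (if InCut S e ∧ Separates S (s i) (t i) then y i S else 0) :=
                Finset.sum_congr rfl fun i _ => Finset.sum_comm
            _ = ∑ e ∈ Fstar, ∑ i : ι, ∑ S : Finset V,
                (if InCut S e ∧ Separates S (s i) (t i) then y i S else 0) :=
                Finset.sum_comm
            _ = ∑ e ∈ Fstar, ∑ S : Finset V, ∑ i : ι,
                (if InCut S e ∧ Separates S (s i) (t i) then y i S else 0) :=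
                Finset.sum_congr rfl fun e _ => Finset.sum_comm
      _ ≤ ∑ e ∈ Fstar, c e :=
          Finset.sum_le_sum fun e he => hedge e (hFstar he)
  have h3 : ∑ i ∈ X, π i / ε ≤ ∑ e ∈ Fstar, c e :=
    le_trans (Finset.sum_le_sum key) mid
  have h4 : ∑ i ∈ X, π i / ε = (∑ i ∈ X, π i) / ε := by
    rw [Finset.sum_div]
  rw [h4, div_le_iff₀ hε] at h3
  linarith
end
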